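/- Define the value function D by D(0, t) := 0 for all t ∈ ℝ, and for l ≥ 1 and t > T_opt(0, l), D(l, t) := the maximum of chainSum I ({0} ∪ A ∪ {l}) over all feasible pairs (A, S) of problem P(l, t). Then for every l ≥ 1 and every t > T_opt(0, l), D satisfies the Bellman equation D(l, t) = max over k ∈ {0, …, l−1} with T_opt(0, k) + T_opt(k, l) < t of (D(k, t − T_opt(k, l)) + I(k, l)), where the maximization set is nonempty (it contains k = 0) and each occurring value D(k, t − T_opt(k, l)) is well defined since T_opt(0, k) < t − T_opt(k, l). -/

import Mathlib

noncomputable section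

/-- Chain sum of `f` over the consecutive pairs of the elements of `P` in increasing order. -/
def chainSum (f : ℕ → ℕ → ℝ) (P : Finset ℕ) : ℝ :=
  (List.zipWith f (P.sort (· ≤ ·)) (P.sort (· ≤ ·)).tail).sum

def listChain (f : ℕ → ℕ → ℝ) (l : List ℕ) : ℝ := (List.zipWith f l l.tail).sum

lemma chainSum_eq (f : ℕ → ℕ → ℝ) (P : Finset ℕ) :
    chainSum f P = listChain f (P.sort (· ≤ ·)) := rfl

lemma listChain_append (f : ℕ → ℕ → ℝ) (l₁ : List ℕ) (x : ℕ) (l₂ : List ℕ) :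
    listChain f (l₁ ++ x :: l₂) = listChain f (l₁ ++ [x]) + listChain f (x :: l₂) := by
  induction l₁ with
  | nil => simp [listChain]
  | cons a l₁ ih =>
    cases l₁ with
    | nil => simp [listChain]
    | cons b l₁ =>
      simp only [List.cons_append, listChain, List.tail_cons, List.zipWith_cons_cons,
        List.sum_cons] at ih ⊢
      linarith

lemma sort_filter_append (P : Finset ℕ) (p : ℕ → Prop) [DecidablePred p]
    (hp : ∀ a b : ℕ, p b → a ≤ b → p a) :
    P.sort (· ≤ ·) = (P.filter p).sort (· ≤ ·) ++ (P.filter (fun a => ¬ p a)).sort (· ≤ ·) := by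
  apply List.Perm.eq_of_pairwise' (Finset.pairwise_sort _ _)
  · rw [List.pairwise_append]
    refine ⟨Finset.pairwise_sort _ _, Finset.pairwise_sort _ _, ?_⟩
    intro a ha b hb
    rw [Finset.mem_sort, Finset.mem_filter] at ha hb
    by_contra h
    exact hb.2 (hp b a ha.2 (le_of_not_ge h))
  · rw [← Multiset.coe_eq_coe]
    have : ((↑(Finset.sort (Finset.filter p P) (fun x1 x2 => x1 ≤ x2) ++ Finset.sort (Finset.filter (fun a => ¬ p a) P) (fun x1 x2 => x1 ≤ x2)) : Multiset ℕ)) = ↑(Finset.sort (Finset.filter p P) (fun x1 x2 => x1 ≤ x2)) + ↑(Finset.sort (Finset.filter (fun a => ¬ p a) P) (fun x1 x2 => x1 ≤ x2)) := rfl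
    rw [this]
    simp only [Finset.sort_eq, Finset.filter_val]
    exact (Multiset.filter_add_not p P.val).symm

lemma filter_le_ge_eq_singleton (P : Finset ℕ) (k : ℕ) (hk : k ∈ P) :
    (P.filter (fun a => a ≤ k)).filter (fun a => ¬ a < k) = {k} := by
  ext a
  simp only [Finset.mem_filter, Finset.mem_singleton]
  constructor
  · rintro ⟨⟨_, h1⟩, h2⟩; omega
  · rintro rfl; exact ⟨⟨hk, le_refl _⟩, by omega⟩

lemma filter_ge_le_eq_singleton (P : Finset ℕ) (k : ℕ) (hk : k ∈ P) :
    (P.filter (fun a => ¬ a ≤ k)).filter (fun a => a ≤ k) = (∅ : Finset ℕ) := by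
  ext a; simp only [Finset.mem_filter, Finset.notMem_empty, iff_false]; tauto

lemma sort_split_at (P : Finset ℕ) (k : ℕ) (hk : k ∈ P) :
    P.sort (· ≤ ·) = (P.filter (fun a => a < k)).sort (· ≤ ·) ++
      k :: (P.filter (fun a => k < a)).sort (· ≤ ·) := by
  rw [sort_filter_append P (fun a => a ≤ k) (fun a b hb hab => le_trans hab hb)]
  have h1 : P.filter (fun a => a ≤ k) = P.filter (fun a => a < k) ∪ {k} := by
    ext a
    simp only [Finset.mem_filter, Finset.mem_union, Finset.mem_singleton]
    constructor
    · rintro ⟨h1, h2⟩; rcases eq_or_lt_of_le h2 with h | h; · right; omega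
      · left; exact ⟨h1, h⟩
    · rintro (⟨h1, h2⟩ | rfl); exacts [⟨h1, le_of_lt h2⟩, ⟨hk, le_refl _⟩]
  have h2 : P.filter (fun a => ¬ a ≤ k) = P.filter (fun a => k < a) := by
    ext a; simp only [Finset.mem_filter, not_le]
  rw [h1, h2]
  rw [sort_filter_append (P.filter (fun a => a < k) ∪ {k}) (fun a => a < k)
    (fun a b hb hab => lt_of_le_of_lt hab hb)]
  have e1 : (P.filter (fun a => a < k) ∪ {k}).filter (fun a => a < k)
      = P.filter (fun a => a < k) := by
    ext a
    simp only [Finset.mem_filter, Finset.mem_union, Finset.mem_singleton]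
    constructor
    · rintro ⟨h1 | rfl, h2⟩; exacts [⟨h1.1, h2⟩, absurd h2 (lt_irrefl _)]
    · exact fun h => ⟨Or.inl ⟨h.1, h.2⟩, h.2⟩
  have e2 : (P.filter (fun a => a < k) ∪ {k}).filter (fun a => ¬ a < k) = {k} := by
    ext a
    simp only [Finset.mem_filter, Finset.mem_union, Finset.mem_singleton]
    constructor
    · rintro ⟨h1 | rfl, h2⟩; exacts [absurd h1.2 h2, rfl]
    · rintro rfl; exact ⟨Or.inr rfl, lt_irrefl _⟩
  rw [e1, e2, Finset.sort_singleton, List.append_assoc]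
  rfl

lemma chainSum_split (f : ℕ → ℕ → ℝ) (P : Finset ℕ) (k : ℕ) (hk : k ∈ P) :
    chainSum f P = chainSum f (P.filter (fun a => a < k) ∪ {k}) +
      chainSum f ({k} ∪ P.filter (fun a => k < a)) := by
  have hs := sort_split_at P k hk
  have hk1 : k ∈ P.filter (fun a => a < k) ∪ {k} := by simp
  have hk2 : k ∈ ({k} : Finset ℕ) ∪ P.filter (fun a => k < a) := by simp
  have hs1 := sort_split_at _ k hk1
  have hs2 := sort_split_at _ k hk2
  have e1 : (P.filter (fun a => a < k) ∪ {k}).filter (fun a => a < k)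
      = P.filter (fun a => a < k) := by
    ext a
    simp only [Finset.mem_filter, Finset.mem_union, Finset.mem_singleton]
    constructor
    · rintro ⟨h1 | rfl, h2⟩; exacts [⟨h1.1, h2⟩, absurd h2 (lt_irrefl _)]
    · exact fun h => ⟨Or.inl ⟨h.1, h.2⟩, h.2⟩
  have e1' : (P.filter (fun a => a < k) ∪ {k}).filter (fun a => k < a) = ∅ := by
    ext a
    simp only [Finset.mem_filter, Finset.mem_union, Finset.mem_singleton,
      Finset.notMem_empty, iff_false]
    rintro ⟨h1 | rfl, h2⟩; exacts [absurd h1.2 (by omega), absurd h2 (lt_irrefl _)]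
  have e2 : (({k} : Finset ℕ) ∪ P.filter (fun a => k < a)).filter (fun a => a < k) = ∅ := by
    ext a
    simp only [Finset.mem_filter, Finset.mem_union, Finset.mem_singleton,
      Finset.notMem_empty, iff_false]
    rintro ⟨rfl | h1, h2⟩; exacts [absurd h2 (lt_irrefl _), absurd h1.2 (by omega)]
  have e2' : (({k} : Finset ℕ) ∪ P.filter (fun a => k < a)).filter (fun a => k < a)
      = P.filter (fun a => k < a) := by
    ext a
    simp only [Finset.mem_filter, Finset.mem_union, Finset.mem_singleton]
    constructor
    · rintro ⟨rfl | h1, h2⟩; exacts [absurd h2 (lt_irrefl _), ⟨h1.1, h2⟩]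
    · exact fun h => ⟨Or.inr ⟨h.1, h.2⟩, h.2⟩
  rw [e1, e1'] at hs1
  rw [e2, e2'] at hs2
  simp only [Finset.sort_empty, List.nil_append, List.append_nil] at hs1 hs2
  rw [chainSum_eq, chainSum_eq, chainSum_eq, hs, hs1, hs2, listChain_append]

lemma chainSum_union_split (f : ℕ → ℕ → ℝ) (a l k : ℕ) (S : Finset ℕ)
    (hS : S ⊆ Finset.Ioo a l) (hk : k ∈ S) :
    chainSum f ({a} ∪ S ∪ {l}) = chainSum f ({a} ∪ S.filter (fun x => x < k) ∪ {k}) +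
      chainSum f ({k} ∪ S.filter (fun x => k < x) ∪ {l}) := by
  have hmem : ∀ x ∈ S, a < x ∧ x < l := fun x hx => Finset.mem_Ioo.mp (hS hx)
  have hak : a < k := (hmem k hk).1
  have hkl : k < l := (hmem k hk).2
  have hkP : k ∈ ({a} : Finset ℕ) ∪ S ∪ {l} := by simp [hk]
  rw [chainSum_split f _ k hkP]
  congr 2
  · ext x
    by_cases hxS : x ∈ S
    · have := hmem x hxS
      simp only [Finset.mem_union, Finset.mem_filter, Finset.mem_singleton, hxS,
        true_and, or_true, true_or, and_true]
      omega
    · simp only [Finset.mem_union, Finset.mem_filter, Finset.mem_singleton, hxS,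
        false_and, or_false, false_or, and_false]
      omega
  · ext x
    by_cases hxS : x ∈ S
    · have := hmem x hxS
      simp only [Finset.mem_union, Finset.mem_filter, Finset.mem_singleton, hxS,
        true_and, or_true, true_or, and_true]
      omega
    · simp only [Finset.mem_union, Finset.mem_filter, Finset.mem_singleton, hxS,
        false_and, or_false, false_or, and_false]
      omega

lemma chainSum_pair (f : ℕ → ℕ → ℝ) {a b : ℕ} (h : a < b) :
    chainSum f ({a} ∪ {b}) = f a b := by
  have ha : a ∈ ({a} : Finset ℕ) ∪ {b} := by simp
  have hs := sort_split_at (({a} : Finset ℕ) ∪ {b}) a ha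
  have e1 : (({a} : Finset ℕ) ∪ {b}).filter (fun x => x < a) = ∅ := by
    ext x
    simp only [Finset.mem_filter, Finset.mem_union, Finset.mem_singleton,
      Finset.notMem_empty, iff_false]
    rintro ⟨rfl | rfl, h2⟩ <;> omega
  have e2 : (({a} : Finset ℕ) ∪ {b}).filter (fun x => a < x) = {b} := by
    ext x
    simp only [Finset.mem_filter, Finset.mem_union, Finset.mem_singleton]
    constructor
    · rintro ⟨rfl | rfl, h2⟩; · omega
      · rfl
    · rintro rfl; exact ⟨Or.inr rfl, h⟩
  rw [e1, e2, Finset.sort_empty, Finset.sort_singleton] at hs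
  rw [chainSum_eq, hs]
  simp [listChain]

lemma chainSum_singleton (f : ℕ → ℕ → ℝ) (a : ℕ) : chainSum f {a} = 0 := by
  rw [chainSum_eq, Finset.sort_singleton]
  simp [listChain]

/-- Optimal latency `T_opt(k,l)`: the minimum of `chainSum T ({k} ∪ S ∪ {l})`
over all finite sets `S ⊆ {k+1,…,l−1}`. -/
def Topt (T : ℕ → ℕ → ℝ) (k l : ℕ) : ℝ :=
  ((Finset.Ioo k l).powerset.image (fun S => chainSum T ({k} ∪ S ∪ {l}))).min'
    ((Finset.powerset_nonempty _).image _)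

lemma Topt_le (T : ℕ → ℕ → ℝ) {k l : ℕ} {S : Finset ℕ} (hS : S ⊆ Finset.Ioo k l) :
    Topt T k l ≤ chainSum T ({k} ∪ S ∪ {l}) :=
  Finset.min'_le _ _ (Finset.mem_image_of_mem _ (Finset.mem_powerset.mpr hS))

lemma exists_Topt (T : ℕ → ℕ → ℝ) (k l : ℕ) :
    ∃ S : Finset ℕ, S ⊆ Finset.Ioo k l ∧ chainSum T ({k} ∪ S ∪ {l}) = Topt T k l := by
  have h := Finset.min'_mem ((Finset.Ioo k l).powerset.image
    (fun S => chainSum T ({k} ∪ S ∪ {l}))) ((Finset.powerset_nonempty _).image _)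
  rw [Finset.mem_image] at h
  obtain ⟨S, hS, hEq⟩ := h
  exact ⟨S, Finset.mem_powerset.mp hS, hEq⟩

lemma Topt_self (T : ℕ → ℕ → ℝ) (k : ℕ) : Topt T k k = 0 := by
  rw [Topt]
  simp
  exact chainSum_singleton T k

/-- Bellman equation for the value function `D` of problem `P(l,t)`. -/
theorem value_function_bellman (T I : ℕ → ℕ → ℝ) (D : ℕ → ℝ → ℝ)
    (hD0 : ∀ t : ℝ, D 0 t = 0)
    (hD : ∀ l, 1 ≤ l → ∀ t : ℝ, Topt T 0 l < t →
      IsGreatest {x : ℝ | ∃ A S : Finset ℕ, A ⊆ S ∧ S ⊆ Finset.Ioo 0 l ∧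
        chainSum T ({0} ∪ S ∪ {l}) < t ∧ x = chainSum I ({0} ∪ A ∪ {l})} (D l t)) :
    ∀ l, 1 ≤ l → ∀ t : ℝ, Topt T 0 l < t →
      (Topt T 0 0 + Topt T 0 l < t) ∧
      (∀ k, k < l → Topt T 0 k + Topt T k l < t → Topt T 0 k < t - Topt T k l) ∧
      IsGreatest {x : ℝ | ∃ k, k < l ∧ Topt T 0 k + Topt T k l < t ∧
        x = D k (t - Topt T k l) + I k l} (D l t) := by
  intro l hl t ht
  have h00 : Topt T 0 0 = 0 := Topt_self T 0
  have hub : ∀ k, k < l → Topt T 0 k + Topt T k l < t →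
      D k (t - Topt T k l) + I k l ≤ D l t := by
    intro k hkl hkt
    obtain ⟨S', hS', hS'eq⟩ := exists_Topt T k l
    rcases Nat.eq_zero_or_pos k with rfl | hk1
    · rw [hD0]
      rw [h00] at hkt
      have hmem : I 0 l ∈ {x : ℝ | ∃ A S : Finset ℕ, A ⊆ S ∧ S ⊆ Finset.Ioo 0 l ∧
          chainSum T ({0} ∪ S ∪ {l}) < t ∧ x = chainSum I ({0} ∪ A ∪ {l})} := by
        refine ⟨∅, S', Finset.empty_subset _, hS', by rw [hS'eq]; linarith, ?_⟩
        rw [show ({0} : Finset ℕ) ∪ ∅ ∪ {l} = {0} ∪ {l} by simp]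
        exact (chainSum_pair I (by omega)).symm
      have := (hD l hl t ht).2 hmem
      linarith
    · set t' := t - Topt T k l with ht'
      have hTopt0k : Topt T 0 k < t' := by rw [ht']; linarith
      have hDk := hD k hk1 t' hTopt0k
      obtain ⟨A, S, hAS, hSk, hTS, hxval⟩ := hDk.1
      have hSIoo : ∀ x ∈ S, 0 < x ∧ x < k := fun x hx => Finset.mem_Ioo.mp (hSk hx)
      have hS'Ioo : ∀ x ∈ S', k < x ∧ x < l := fun x hx => Finset.mem_Ioo.mp (hS' hx)
      set Sb : Finset ℕ := S ∪ {k} ∪ S' with hSb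
      set Ab : Finset ℕ := A ∪ {k} with hAb
      have hSbIoo : Sb ⊆ Finset.Ioo 0 l := by
        intro x hx
        rw [hSb] at hx
        simp only [Finset.mem_union, Finset.mem_singleton] at hx
        rw [Finset.mem_Ioo]
        rcases hx with (hx | rfl) | hx
        · have := hSIoo x hx; omega
        · omega
        · have := hS'Ioo x hx; omega
      have hkSb : k ∈ Sb := by simp [hSb]
      have e1 : Sb.filter (fun x => x < k) = S := by
        ext x
        rw [hSb]
        simp only [Finset.mem_filter, Finset.mem_union, Finset.mem_singleton]
        constructor
        · rintro ⟨(hx | rfl) | hx, h2⟩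
          · exact hx
          · omega
          · exact absurd (hS'Ioo x hx).1 (by omega)
        · intro hx; exact ⟨Or.inl (Or.inl hx), (hSIoo x hx).2⟩
      have e2 : Sb.filter (fun x => k < x) = S' := by
        ext x
        rw [hSb]
        simp only [Finset.mem_filter, Finset.mem_union, Finset.mem_singleton]
        constructor
        · rintro ⟨(hx | rfl) | hx, h2⟩
          · exact absurd (hSIoo x hx).2 (by omega)
          · omega
          · exact hx
        · intro hx; exact ⟨Or.inr hx, (hS'Ioo x hx).1⟩
      have hTsplit := chainSum_union_split T 0 l k Sb hSbIoo hkSb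
      rw [e1, e2] at hTsplit
      have hAbIoo : Ab ⊆ Sb := by
        rw [hAb, hSb]
        intro x hx
        simp only [Finset.mem_union, Finset.mem_singleton] at hx ⊢
        rcases hx with hx | rfl
        · exact Or.inl (Or.inl (hAS hx))
        · exact Or.inl (Or.inr rfl)
      have hkAb : k ∈ Ab := by simp [hAb]
      have f1 : Ab.filter (fun x => x < k) = A := by
        ext x
        rw [hAb]
        simp only [Finset.mem_filter, Finset.mem_union, Finset.mem_singleton]
        constructor
        · rintro ⟨hx | rfl, h2⟩
          · exact hx
          · omega
        · intro hx; exact ⟨Or.inl hx, (hSIoo x (hAS hx)).2⟩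
      have f2 : Ab.filter (fun x => k < x) = ∅ := by
        ext x
        rw [hAb]
        simp only [Finset.mem_filter, Finset.mem_union, Finset.mem_singleton,
          Finset.notMem_empty, iff_false]
        rintro ⟨hx | rfl, h2⟩
        · exact absurd (hSIoo x (hAS hx)).2 (by omega)
        · omega
      have hIsplit := chainSum_union_split I 0 l k Ab (hAbIoo.trans hSbIoo) hkAb
      rw [f1, f2] at hIsplit
      rw [show ({k} : Finset ℕ) ∪ ∅ ∪ {l} = {k} ∪ {l} by simp,
        chainSum_pair I (show k < l from hkl)] at hIsplit
      have hmem : chainSum I ({0} ∪ Ab ∪ {l}) ∈ {x : ℝ | ∃ A S : Finset ℕ, A ⊆ S ∧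
          S ⊆ Finset.Ioo 0 l ∧ chainSum T ({0} ∪ S ∪ {l}) < t ∧
          x = chainSum I ({0} ∪ A ∪ {l})} := by
        refine ⟨Ab, Sb, hAbIoo, hSbIoo, ?_, rfl⟩
        rw [hTsplit, hS'eq]
        rw [ht'] at hTS
        linarith
      have hle := (hD l hl t ht).2 hmem
      rw [hIsplit, ← hxval] at hle
      exact hle
  refine ⟨by rw [h00]; linarith, fun k _ h => by linarith, ?_, ?_⟩
  · -- membership
    obtain ⟨A, S, hAS, hSl, hTS, hDval⟩ := (hD l hl t ht).1
    have hSIoo : ∀ x ∈ S, 0 < x ∧ x < l := fun x hx => Finset.mem_Ioo.mp (hSl hx)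
    rcases A.eq_empty_or_nonempty with rfl | hA
    · have hTl : Topt T 0 l < t := lt_of_le_of_lt (Topt_le T hSl) hTS
      refine ⟨0, hl, by rw [h00]; linarith, ?_⟩
      rw [hD0, hDval, show ({0} : Finset ℕ) ∪ ∅ ∪ {l} = {0} ∪ {l} by simp,
        chainSum_pair I (show 0 < l from hl)]
      ring
    · set k := A.max' hA with hkdef
      have hkA : k ∈ A := A.max'_mem hA
      have hkS : k ∈ S := hAS hkA
      have hk0 : 0 < k := (hSIoo k hkS).1
      have hkl : k < l := (hSIoo k hkS).2
      set S₁ : Finset ℕ := S.filter (fun x => x < k) with hS₁def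
      set S₂ : Finset ℕ := S.filter (fun x => k < x) with hS₂def
      have hS₁ : S₁ ⊆ Finset.Ioo 0 k := by
        intro x hx
        rw [hS₁def, Finset.mem_filter] at hx
        rw [Finset.mem_Ioo]
        exact ⟨(hSIoo x hx.1).1, hx.2⟩
      have hS₂ : S₂ ⊆ Finset.Ioo k l := by
        intro x hx
        rw [hS₂def, Finset.mem_filter] at hx
        rw [Finset.mem_Ioo]
        exact ⟨hx.2, (hSIoo x hx.1).2⟩
      have hTsplit := chainSum_union_split T 0 l k S hSl hkS
      have hT2 : Topt T k l ≤ chainSum T ({k} ∪ S₂ ∪ {l}) := Topt_le T hS₂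
      set t' := t - Topt T k l with ht'
      have hlt1 : chainSum T ({0} ∪ S₁ ∪ {k}) < t' := by
        rw [ht']; rw [← hS₁def, ← hS₂def] at hTsplit; linarith
      have hT0k : Topt T 0 k < t' := lt_of_le_of_lt (Topt_le T hS₁) hlt1
      have hkt : Topt T 0 k + Topt T k l < t := by
        rw [ht'] at hT0k; linarith
      have hDk := hD k hk0 t' hT0k
      -- split the I chain at k
      have hIsplit := chainSum_union_split I 0 l k A (hAS.trans hSl) hkA
      have fA2 : A.filter (fun x => k < x) = ∅ := by
        ext x
        simp only [Finset.mem_filter, Finset.notMem_empty, iff_false]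
        rintro ⟨hx, h2⟩
        exact absurd (A.le_max' x hx) (by omega)
      rw [fA2, show ({k} : Finset ℕ) ∪ ∅ ∪ {l} = {k} ∪ {l} by simp,
        chainSum_pair I hkl] at hIsplit
      have hA₁ : A.filter (fun x => x < k) ⊆ S₁ := by
        rw [hS₁def]; exact Finset.filter_subset_filter _ hAS
      have hmem : chainSum I ({0} ∪ A.filter (fun x => x < k) ∪ {k}) ∈
          {x : ℝ | ∃ A' S' : Finset ℕ, A' ⊆ S' ∧ S' ⊆ Finset.Ioo 0 k ∧
            chainSum T ({0} ∪ S' ∪ {k}) < t' ∧ x = chainSum I ({0} ∪ A' ∪ {k})} :=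
        ⟨A.filter (fun x => x < k), S₁, hA₁, hS₁, hlt1, rfl⟩
      have hle := hDk.2 hmem
      have hge := hub k hkl hkt
      refine ⟨k, hkl, hkt, ?_⟩
      rw [← ht'] at hge ⊢
      rw [hDval, hIsplit] at hge ⊢
      linarith
  · rintro x ⟨k, hkl, hkt, rfl⟩
    exact hub k hkl hkt
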